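/- arXiv:1512.06849 — 3 statements merged into one kernel-verified Lean document; each statement's English description precedes it below -/
import Mathlib

section
/- If X is a metrizable uniformly hemicompact space, then the set CL(X) of closed subsets of X equipped with the Fell topology is metrizable. -/
open TopologicalSpace Set Metric Filter OnePoint

namespace FellAux

open OnePoint

variable {Y : Type*} [MetricSpace Y]

lemma hedist_ne_top (C D : NonemptyCompacts Y) :
    EMetric.hausdorffEdist (C : Set Y) (D : Set Y) ≠ ⊤ :=
  Metric.hausdorffEdist_ne_top_of_nonempty_of_bounded C.nonempty D.nonempty
    C.isCompact.isBounded D.isCompact.isBounded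

lemma isOpen_hit {V : Set Y} (hV : IsOpen V) :
    IsOpen {C : NonemptyCompacts Y | ((C : Set Y) ∩ V).Nonempty} := by
  rw [Metric.isOpen_iff]
  rintro C ⟨c, hcC, hcV⟩
  obtain ⟨r, hr, hball⟩ := Metric.isOpen_iff.1 hV c hcV
  refine ⟨r, hr, fun D hD => ?_⟩
  rw [mem_ball, NonemptyCompacts.dist_eq] at hD
  obtain ⟨d, hdD, hd⟩ := Metric.exists_dist_lt_of_hausdorffDist_lt' hcC hD (hedist_ne_top D C)
  exact ⟨d, hdD, hball (mem_ball.2 hd)⟩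

lemma isOpen_miss {K : Set Y} (hK : IsCompact K) :
    IsOpen {C : NonemptyCompacts Y | Disjoint (C : Set Y) K} := by
  rw [Metric.isOpen_iff]
  intro C hC
  obtain ⟨δ, hδ, hdisj⟩ := hC.exists_thickenings C.isCompact hK.isClosed
  refine ⟨δ, hδ, fun D hD => ?_⟩
  rw [mem_ball, NonemptyCompacts.dist_eq] at hD
  refine Set.disjoint_left.2 fun {d} hdD hdK => ?_
  have h1 : d ∈ thickening δ (C : Set Y) := by
    rw [mem_thickening_iff_infDist_lt C.nonempty]
    exact lt_of_le_of_lt (Metric.infDist_le_hausdorffDist_of_mem hdD (hedist_ne_top D C)) hD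
  exact Set.disjoint_left.1 hdisj h1 (self_subset_thickening hδ K hdK)

lemma secondCountable_onePoint {X : Type*} [MetricSpace X] [SecondCountableTopology X]
    (H : ℕ → Set X) (hcomp : ∀ k, IsCompact (H k))
    (habs : ∀ K : Set X, IsCompact K → ∃ n, K ⊆ H n) :
    SecondCountableTopology (OnePoint X) := by
  set B : Set (Set (OnePoint X)) :=
    ((fun U => ((↑) : X → OnePoint X) '' U) '' countableBasis X) ∪
      (range fun n => (((↑) : X → OnePoint X) '' H n)ᶜ) with hB
  have hbasis : IsTopologicalBasis B := by
    apply isTopologicalBasis_of_isOpen_of_nhds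
    · rintro u (⟨U, hU, rfl⟩ | ⟨n, rfl⟩)
      · exact OnePoint.isOpen_image_coe.2 ((isBasis_countableBasis X).isOpen hU)
      · exact (OnePoint.isClosed_image_coe.2 ⟨(hcomp n).isClosed, hcomp n⟩).isOpen_compl
    · intro y s hys hs
      induction y using OnePoint.rec with
      | infty =>
        have hclosed : IsClosed sᶜ := hs.isClosed_compl
        have hni : ∞ ∉ sᶜ := fun h => h hys
        have hsub : sᶜ ⊆ range ((↑) : X → OnePoint X) := by
          intro y hy
          rcases OnePoint.insert_infty_range_coe (X := X) ▸ mem_univ y with h | h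
          · exact absurd (h ▸ hy) hni
          · exact h
        have hKcpt : IsCompact (((↑) : X → OnePoint X) ⁻¹' sᶜ) := by
          rw [OnePoint.isOpenEmbedding_coe.isEmbedding.isCompact_iff,
            Set.image_preimage_eq_of_subset hsub]
          exact hclosed.isCompact
        obtain ⟨n, hn⟩ := habs _ hKcpt
        refine ⟨(((↑) : X → OnePoint X) '' H n)ᶜ, Or.inr ⟨n, rfl⟩, ?_, ?_⟩
        · rintro ⟨x, _, hx⟩
          exact OnePoint.coe_ne_infty x hx
        · intro y hy
          by_contra hys'
          obtain ⟨x, rfl⟩ := hsub hys'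
          exact hy ⟨x, hn hys', rfl⟩
      | coe x =>
        have hxo : x ∈ ((↑) : X → OnePoint X) ⁻¹' s := hys
        have hopen : IsOpen (((↑) : X → OnePoint X) ⁻¹' s) := hs.preimage OnePoint.continuous_coe
        obtain ⟨U, hU, hxU, hUs⟩ := (isBasis_countableBasis X).exists_subset_of_mem_open hxo hopen
        refine ⟨((↑) : X → OnePoint X) '' U, Or.inl ⟨U, hU, rfl⟩, ⟨x, hxU, rfl⟩, ?_⟩
        rintro y ⟨z, hz, rfl⟩
        exact hUs hz
  have hcount : B.Countable :=
    ((countable_countableBasis X).image _).union (countable_range _)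
  exact hbasis.secondCountableTopology hcount

end FellAux

/-- If `X` is a metrizable uniformly hemicompact space, then the set of closed
subsets of `X` with the Fell topology is metrizable. -/
theorem fell_metrizable_of_uniformly_hemicompact {X : Type*} [MetricSpace X]
    (H : ℕ → Set X) (hcomp : ∀ k, IsCompact (H k))
    (hunion : ⋃ k, H k = Set.univ)
    (hnbhd : ∀ k, H k ⊆ interior (H (k + 1))) :
    @TopologicalSpace.MetrizableSpace {A : Set X // IsClosed A}
      (generateFrom
        ({S : Set {A : Set X // IsClosed A} |
            ∃ U : Set X, IsOpen U ∧ S = {A | (A.1 ∩ U).Nonempty}} ∪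
         {S | ∃ K : Set X, IsCompact K ∧ S = {A | A.1 ⊆ Kᶜ}})) := by
  classical
  haveI : SigmaCompactSpace X := ⟨⟨H, hcomp, hunion⟩⟩
  haveI : WeaklyLocallyCompactSpace X := by
    constructor
    intro x
    obtain ⟨k, hk⟩ := mem_iUnion.1 (hunion ▸ mem_univ x : x ∈ ⋃ k, H k)
    exact ⟨H (k + 1), hcomp _, mem_interior_iff_mem_nhds.1 (hnbhd k hk)⟩
  have hmono : Monotone H := monotone_nat_of_le_succ fun n => (hnbhd n).trans interior_subset
  have habs : ∀ K : Set X, IsCompact K → ∃ n, K ⊆ H n := by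
    intro K hK
    have hcover : K ⊆ ⋃ k, interior (H (k + 1)) := by
      intro x _
      obtain ⟨k, hk⟩ := mem_iUnion.1 (hunion ▸ mem_univ x : x ∈ ⋃ k, H k)
      exact mem_iUnion.2 ⟨k, hnbhd k hk⟩
    obtain ⟨t, ht⟩ := hK.elim_finite_subcover (fun k => interior (H (k + 1)))
      (fun k => isOpen_interior) hcover
    refine ⟨t.sup id + 1, fun x hx => ?_⟩
    obtain ⟨k, hkt, hxk⟩ := Set.mem_iUnion₂.1 (ht hx)
    exact hmono (Nat.succ_le_succ (Finset.le_sup (f := id) hkt)) (interior_subset hxk)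
  haveI := FellAux.secondCountable_onePoint H hcomp habs
  haveI : MetrizableSpace (OnePoint X) := inferInstance
  letI : MetricSpace (OnePoint X) := TopologicalSpace.metrizableSpaceMetric (OnePoint X)
  set CL := {A : Set X // IsClosed A}
  set SS : Set (Set CL) :=
    ({S : Set CL | ∃ U : Set X, IsOpen U ∧ S = {A | (A.1 ∩ U).Nonempty}} ∪
      {S | ∃ K : Set X, IsCompact K ∧ S = {A | A.1 ⊆ Kᶜ}}) with hSS
  show @MetrizableSpace CL (generateFrom SS)
  -- The embedding into nonempty compact subsets of the one-point compactification
  let s : CL → Set (OnePoint X) := fun A => insert ∞ (((↑) : X → OnePoint X) '' A.1)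
  have hpre : ∀ A : CL, ((↑) : X → OnePoint X) ⁻¹' (s A) = A.1 := by
    intro A
    ext x
    simp [s, OnePoint.coe_ne_infty, OnePoint.coe_eq_coe]
  have hs_closed : ∀ A : CL, IsClosed (s A) := by
    intro A
    rw [OnePoint.isClosed_iff_of_mem (mem_insert _ _), hpre A]
    exact A.2
  have hs_cpt : ∀ A : CL, IsCompact (s A) := fun A => (hs_closed A).isCompact
  let φ : CL → NonemptyCompacts (OnePoint X) := fun A =>
    ⟨⟨s A, hs_cpt A⟩, ⟨∞, mem_insert _ _⟩⟩
  have hφ_inj : Function.Injective φ := by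
    intro A B hAB
    have h1 : (φ A : Set (OnePoint X)) = (φ B : Set (OnePoint X)) := by rw [hAB]
    apply Subtype.ext
    rw [← hpre A, ← hpre B]
    exact congrArg (fun t => ((↑) : X → OnePoint X) ⁻¹' t) h1
  have key : generateFrom SS = TopologicalSpace.induced φ inferInstance := by
    apply le_antisymm
    · -- generateFrom is finer: φ is continuous for the Fell topology
      letI : TopologicalSpace CL := generateFrom SS
      refine continuous_iff_le_induced.mp ?_
      rw [continuous_iff_continuousAt]
      intro A
      rw [ContinuousAt, Metric.tendsto_nhds]
      intro ε hε
      set ε' : ℝ := ε / 4 with hε'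
      have hε'pos : 0 < ε' := by positivity
      -- the compact "miss" set
      set KY : Set (OnePoint X) := {y | ε' ≤ infDist y (s A)} with hKY
      have hKYclosed : IsClosed KY :=
        isClosed_le continuous_const (continuous_infDist_pt (s A))
      have hKYsub : KY ⊆ range ((↑) : X → OnePoint X) := by
        intro y hy
        rcases OnePoint.insert_infty_range_coe (X := X) ▸ mem_univ y with h | h
        · exfalso
          have : infDist y (s A) = 0 := h ▸ infDist_zero_of_mem (mem_insert _ _)
          rw [hKY] at hy
          simp only [mem_setOf_eq, this] at hy
          exact absurd hy (not_le.2 hε'pos)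
        · exact h
      set K : Set X := ((↑) : X → OnePoint X) ⁻¹' KY with hK
      have hKcpt : IsCompact K := by
        rw [OnePoint.isOpenEmbedding_coe.isEmbedding.isCompact_iff,
          Set.image_preimage_eq_of_subset hKYsub]
        exact hKYclosed.isCompact
      -- finite ε'-net of s A
      obtain ⟨t, htsub, htfin, htcov⟩ := (hs_cpt A).finite_cover_balls hε'pos
      set T : Set X := ((↑) : X → OnePoint X) ⁻¹' t with hT
      have hTfin : T.Finite := htfin.preimage (OnePoint.coe_injective.injOn)
      have hTA : T ⊆ A.1 := by
        intro x hx
        rcases htsub hx with h | ⟨a, ha, hax⟩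
        · exact absurd h (OnePoint.coe_ne_infty x)
        · rwa [← OnePoint.coe_eq_coe.1 hax]
      -- the Fell-basic neighbourhood
      set N : Set CL := {B : CL | B.1 ⊆ Kᶜ} ∩
        ⋂ x ∈ T, {B : CL | (B.1 ∩ (((↑) : X → OnePoint X) ⁻¹' ball (x : OnePoint X) ε')).Nonempty}
        with hN
      have hNopen : IsOpen N := by
        refine IsOpen.inter ?_ ?_
        · exact isOpen_generateFrom_of_mem (Or.inr ⟨K, hKcpt, rfl⟩)
        · refine hTfin.isOpen_biInter fun x _ => ?_
          refine isOpen_generateFrom_of_mem (Or.inl ⟨_, ?_, rfl⟩)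
          exact isOpen_ball.preimage OnePoint.continuous_coe
      have hAN : A ∈ N := by
        constructor
        · intro a ha hak
          have h0 : infDist ((a : OnePoint X)) (s A) = 0 :=
            infDist_zero_of_mem (mem_insert_of_mem _ ⟨a, ha, rfl⟩)
          have : ε' ≤ (0 : ℝ) := h0 ▸ hak
          exact absurd this (not_le.2 hε'pos)
        · refine mem_iInter₂.2 fun x hx => ⟨x, hTA hx, ?_⟩
          simp [mem_ball, hε'pos]
      refine Filter.eventually_of_mem (hNopen.mem_nhds hAN) ?_
      rintro B ⟨hBmiss, hBhit⟩
      rw [NonemptyCompacts.dist_eq]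
      show hausdorffDist (s B) (s A) < ε
      have hle : hausdorffDist (s B) (s A) ≤ 2 * ε' := by
        apply hausdorffDist_le_of_infDist (by positivity)
        · rintro y (rfl | ⟨b, hb, rfl⟩)
          · rw [infDist_zero_of_mem (mem_insert _ _)]; positivity
          · have : (b : OnePoint X) ∉ KY := fun h => hBmiss hb h
            have : infDist ((b : OnePoint X)) (s A) < ε' := not_le.1 this
            linarith
        · intro y hy
          obtain ⟨c, hct, hyc⟩ := Set.mem_iUnion₂.1 (htcov hy)
          rw [mem_ball] at hyc
          rcases htsub hct with h | ⟨x, hxA, hxc⟩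
          · -- c = ∞ ∈ s B
            have : infDist y (s B) ≤ dist y c := infDist_le_dist_of_mem (h ▸ mem_insert _ _)
            linarith
          · -- c = coe x with x ∈ T
            have hxT : x ∈ T := by rw [hT, mem_preimage, hxc]; exact hct
            obtain ⟨b, hbB, hbball⟩ := mem_iInter₂.1 hBhit x hxT
            rw [mem_preimage, mem_ball] at hbball
            have hbm : (b : OnePoint X) ∈ s B := mem_insert_of_mem _ ⟨b, hbB, rfl⟩
            have : infDist y (s B) ≤ dist y (b : OnePoint X) := infDist_le_dist_of_mem hbm
            have htri : dist y ((b : OnePoint X)) ≤ dist y c + dist c ((b : OnePoint X)) :=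
              dist_triangle _ _ _
            have : dist c ((b : OnePoint X)) < ε' := by
              rw [← hxc]; rw [dist_comm]; exact hbball
            linarith [infDist_le_dist_of_mem (x := y) hbm,
              dist_triangle y c ((b : OnePoint X))]
      have : (2 : ℝ) * ε' < ε := by rw [hε']; linarith
      linarith
    · -- the induced topology is finer than the Fell topology
      refine le_generateFrom ?_
      rintro S (⟨U, hU, rfl⟩ | ⟨K, hK, rfl⟩)
      · refine isOpen_induced_iff.2
          ⟨{C : NonemptyCompacts (OnePoint X) | ((C : Set (OnePoint X)) ∩
              (((↑) : X → OnePoint X) '' U)).Nonempty},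
            FellAux.isOpen_hit (OnePoint.isOpen_image_coe.2 hU), ?_⟩
        ext A
        simp only [mem_preimage, mem_setOf_eq]
        constructor
        · rintro ⟨y, hyA, u, huU, rfl⟩
          rcases hyA with h | ⟨a, haA, hau⟩
          · exact absurd h.symm (OnePoint.infty_ne_coe u)
          · exact ⟨u, OnePoint.coe_eq_coe.1 hau ▸ haA, huU⟩
        · rintro ⟨a, haA, haU⟩
          exact ⟨(a : OnePoint X), mem_insert_of_mem _ ⟨a, haA, rfl⟩, ⟨a, haU, rfl⟩⟩
      · refine isOpen_induced_iff.2
          ⟨{C : NonemptyCompacts (OnePoint X) | Disjoint (C : Set (OnePoint X))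
              (((↑) : X → OnePoint X) '' K)},
            FellAux.isOpen_miss (hK.image OnePoint.continuous_coe), ?_⟩
        ext A
        simp only [mem_preimage, mem_setOf_eq]
        constructor
        · intro hdisj a haA hak
          exact Set.disjoint_left.1 hdisj (mem_insert_of_mem _ ⟨a, haA, rfl⟩) ⟨a, hak, rfl⟩
        · intro hsub
          refine Set.disjoint_left.2 ?_
          rintro y hyA ⟨k, hkK, rfl⟩
          rcases hyA with h | ⟨a, haA, hak⟩
          · exact absurd h.symm (OnePoint.infty_ne_coe k)
          · exact hsub haA (OnePoint.coe_eq_coe.1 hak ▸ hkK)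
  rw [key]
  letI : TopologicalSpace CL := TopologicalSpace.induced φ inferInstance
  exact Topology.IsEmbedding.metrizableSpace (Topology.IsEmbedding.mk ⟨rfl⟩ hφ_inj)
end

section
/- Let f : [0,∞) → [0,∞) be non-decreasing with f(0)=0 and define graph(f) = {(x₁,x₂) : f(x₁⁻) ≤ x₂ ≤ f(x₁⁺)}. Then graph(f) is a connected subset of [0,∞)². -/
open Function
open scoped NNReal

open Set Filter Topology in
/-- The completed graph of a non-decreasing `f : [0,∞) → [0,∞)` with `f 0 = 0`
is a connected subset of `[0,∞)²`. -/
theorem completedGraph_isConnected (f : ℝ≥0 → ℝ≥0) (hf : Monotone f) (h0 : f 0 = 0) :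
    IsConnected {p : ℝ≥0 × ℝ≥0 | leftLim f p.1 ≤ p.2 ∧ p.2 ≤ rightLim f p.1} := by
  have hL0 : leftLim f 0 = 0 := by
    rw [leftLim_eq_of_eq_bot f
      (by rw [show Iio (0:ℝ≥0) = ∅ from isMin_bot.Iio_eq, nhdsWithin_empty]), h0]
  set S : ℝ≥0 → Set ℝ≥0 := fun t => {x | x + leftLim f x ≤ t} with hS
  have h0S : ∀ t, 0 ∈ S t := fun t => by simp [hS, hL0]
  have hbd : ∀ t, ∀ x ∈ S t, x ≤ t := fun t x hx => le_trans le_self_add hx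
  have hbdd : ∀ t, BddAbove (S t) := fun t => ⟨t, fun x hx => hbd t x hx⟩
  set X : ℝ≥0 → ℝ≥0 := fun t => sSup (S t) with hXdef
  have hXt : ∀ t, X t ≤ t := fun t => csSup_le ⟨0, h0S t⟩ (hbd t)
  have hmemle : ∀ t, ∀ x ∈ S t, x ≤ X t := fun t x hx => le_csSup (hbdd t) hx
  -- the supremum still satisfies the defining inequality
  have key1 : ∀ t, X t + leftLim f (X t) ≤ t := by
    intro t
    by_contra hcon
    push_neg at hcon
    rcases (zero_le : 0 ≤ X t).eq_or_lt with h0X | h0X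
    · rw [← h0X, hL0, add_zero] at hcon
      exact absurd (zero_le : 0 ≤ t) hcon.not_ge
    · have hne : 𝓝[<] (X t) ≠ ⊥ := (nhdsWithin_Iio_self_neBot' (α := ℝ≥0) (b := X t) ⟨0, h0X⟩).ne
      rw [(haveI : (𝓝[<] (X t)).NeBot := ⟨hne⟩; hf.leftLim_eq_sSup)] at hcon
      have h1 : t - X t < sSup (f '' Iio (X t)) := by
        refine lt_of_add_lt_add_left (a := X t) ?_
        rwa [add_tsub_cancel_of_le (hXt t)]
      obtain ⟨y, ⟨x', hx', rfl⟩, hy⟩ :=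
        exists_lt_of_lt_csSup (⟨f 0, 0, h0X, rfl⟩ : (f '' Iio (X t)).Nonempty) h1
      rcases le_or_gt (f x') t with hft | hft
      · have h2 : t - f x' < X t := by
          rw [tsub_lt_iff_right hft, add_comm]
          exact (tsub_lt_iff_right (hXt t)).mp hy
        obtain ⟨x, hxS, hxx⟩ :=
          exists_lt_of_lt_csSup (⟨0, h0S t⟩ : (S t).Nonempty) (max_lt hx' h2)
        have hlt1 : x' < x := (le_max_left _ _).trans_lt hxx
        have hlt2 : t - f x' < x := (le_max_right _ _).trans_lt hxx
        have h3 : t < x + f x' := (tsub_lt_iff_right hft).mp hlt2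
        have h4 : x + f x' ≤ x + leftLim f x := add_le_add_right (hf.le_leftLim hlt1) x
        exact absurd hxS (by simp only [hS, mem_setOf_eq]; push_neg; exact (h3.trans_le h4))
      · obtain ⟨x, hxS, hxx⟩ := exists_lt_of_lt_csSup (⟨0, h0S t⟩ : (S t).Nonempty) hx'
        have h5 : f x' ≤ leftLim f x := hf.le_leftLim hxx
        have h6 : f x' ≤ t := h5.trans (le_trans le_add_self hxS)
        exact absurd h6 hft.not_ge
  have key2 : ∀ t, t ≤ X t + rightLim f (X t) := by
    intro t
    by_contra hcon
    push_neg at hcon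
    have hne : 𝓝[>] (X t) ≠ ⊥ := (inferInstance : (𝓝[>] (X t)).NeBot).ne
    rw [hf.rightLim_eq_sInf] at hcon
    have h1 : sInf (f '' Ioi (X t)) < t - X t := lt_tsub_iff_left.mpr hcon
    obtain ⟨y, ⟨y', hy', rfl⟩, hy⟩ :=
      exists_lt_of_csInf_lt (⟨f (X t + 1), X t + 1, by simp, rfl⟩ :
        (f '' Ioi (X t)).Nonempty) h1
    have h2 : X t + f y' < t := lt_tsub_iff_left.mp hy
    have h3 : X t < t - f y' := lt_tsub_iff_right.mpr h2
    obtain ⟨z, hz1, hz2⟩ := exists_between (lt_min hy' h3)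
    have hzS : z ∈ S t := by
      have hz3 : leftLim f z ≤ f y' := hf.leftLim_le (hz2.le.trans (min_le_left _ _))
      have hz4 : z + f y' < t := lt_tsub_iff_right.mp (hz2.trans_le (min_le_right _ _))
      simp only [hS, mem_setOf_eq]
      exact le_trans (add_le_add_right hz3 z) hz4.le
    exact absurd (hmemle t z hzS) hz1.not_ge
  have hmono : Monotone X := by
    intro s t hst
    exact csSup_le_csSup (hbdd t) ⟨0, h0S s⟩ (fun x hx => le_trans hx hst)
  have key3 : ∀ s t, s ≤ t → X t + s ≤ X s + t := by
    intro s t hst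
    have hub : ∀ x ∈ S t, x + s ≤ X s + t := by
      intro x hx
      rcases le_or_gt x (X s) with h | h
      · exact add_le_add h hst
      · have h1 : rightLim f (X s) ≤ leftLim f x := hf.rightLim_le_leftLim h
        have h2 : s ≤ X s + rightLim f (X s) := key2 s
        calc x + s ≤ x + (X s + rightLim f (X s)) := add_le_add_right h2 x
          _ = X s + (x + rightLim f (X s)) := by ring
          _ ≤ X s + (x + leftLim f x) := add_le_add_right (add_le_add_right h1 x) _
          _ ≤ X s + t := add_le_add_right hx _
    have hz : X t ≤ (X s + t) - s :=
      csSup_le ⟨0, h0S t⟩ (fun x hx => le_tsub_of_add_le_right (hub x hx))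
    calc X t + s ≤ ((X s + t) - s) + s := add_le_add_left hz s
      _ = X s + t := tsub_add_cancel_of_le (hst.trans le_add_self)
  have hXcont : Continuous X := by
    refine (LipschitzWith.of_dist_le_mul (K := 1) fun s t => ?_).continuous
    rw [NNReal.dist_eq, NNReal.dist_eq, NNReal.coe_one, one_mul]
    rcases le_total s t with h | h
    · have h1 : (X s : ℝ) ≤ X t := NNReal.coe_le_coe.2 (hmono h)
      have h2 : (s : ℝ) ≤ t := NNReal.coe_le_coe.2 h
      have h3 := NNReal.coe_le_coe.2 (key3 s t h)
      push_cast at h3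
      rw [abs_sub_comm, abs_of_nonneg (by linarith), abs_sub_comm,
        abs_of_nonneg (by linarith)]
      linarith
    · have h1 : (X t : ℝ) ≤ X s := NNReal.coe_le_coe.2 (hmono h)
      have h2 : (t : ℝ) ≤ s := NNReal.coe_le_coe.2 h
      have h3 := NNReal.coe_le_coe.2 (key3 t s h)
      push_cast at h3
      rw [abs_of_nonneg (by linarith), abs_of_nonneg (by linarith)]
      linarith
  set ψ : ℝ≥0 → ℝ≥0 × ℝ≥0 := fun t => (X t, t - X t) with hψ
  have hψcont : Continuous ψ := hXcont.prodMk (continuous_id.sub hXcont)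
  have hrange : {p : ℝ≥0 × ℝ≥0 | leftLim f p.1 ≤ p.2 ∧ p.2 ≤ rightLim f p.1} = range ψ := by
    ext p
    constructor
    · rintro ⟨hp1, hp2⟩
      refine ⟨p.1 + p.2, ?_⟩
      have hXp : X (p.1 + p.2) = p.1 := by
        refine le_antisymm ?_ (hmemle _ p.1 (add_le_add_right hp1 p.1))
        refine csSup_le ⟨0, h0S _⟩ (fun x hx => ?_)
        by_contra hc
        push_neg at hc
        have h1 : rightLim f p.1 ≤ leftLim f x := hf.rightLim_le_leftLim hc
        have h2 : x + p.2 ≤ x + leftLim f x := add_le_add_right (hp2.trans h1) x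
        have h3 : x + p.2 ≤ p.1 + p.2 := h2.trans hx
        exact absurd (le_of_add_le_add_right h3) (not_le.mpr hc)
      simp only [hψ, hXp, add_tsub_cancel_left]
    · rintro ⟨t, rfl⟩
      exact ⟨le_tsub_of_add_le_left (key1 t), tsub_le_iff_left.mpr (key2 t)⟩
  rw [hrange]
  haveI : ConnectedSpace ℝ≥0 :=
    Function.Surjective.connectedSpace (f := Real.toNNReal)
      (fun x => ⟨x, Real.toNNReal_coe⟩) continuous_real_toNNReal
  exact isConnected_range hψcont
end

section
/- Define d₁(L, L') = max_{v ∈ S(L)} min_{w ∈ S(L')} angle(v, w) for d-dimensional linear subspaces L, L' of ℝⁿ, where S(L) is the unit sphere of L. Then d₁ is symmetric: max_{v ∈ S(L)} min_{w ∈ S(L')} angle(v,w) = max_{w ∈ S(L')} min_{v ∈ S(L)} angle(v,w), for L, L' of the same dimension d. -/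
open InnerProductGeometry RealInnerProductSpace

set_option maxHeartbeats 1000000

noncomputable section SubspaceAngleAux

private lemma arccos_antitone : Antitone Real.arccos := fun x y h => by
  rw [Real.arccos_eq_pi_div_two_sub_arcsin, Real.arccos_eq_pi_div_two_sub_arcsin]
  linarith [Real.monotone_arcsin h]

section SigmaMin

variable {X Y : Type*} [NormedAddCommGroup X] [InnerProductSpace ℝ X]
  [NormedAddCommGroup Y] [InnerProductSpace ℝ Y]
  [FiniteDimensional ℝ X] [FiniteDimensional ℝ Y]

private lemma sphere_nonempty_subtype (hX : 0 < Module.finrank ℝ X) :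
    Nonempty {x : X // ‖x‖ = 1} := by
  have : Nontrivial X := Module.nontrivial_of_finrank_pos hX
  obtain ⟨x, hx⟩ := NormedSpace.sphere_nonempty (E := X) (x := 0) (r := 1) |>.mpr zero_le_one
  exact ⟨⟨x, by simpa using hx⟩⟩

private lemma bddBelow_norm_range {ι : Sort*} (f : ι → ℝ) (h : ∀ i, 0 ≤ f i) :
    BddBelow (Set.range f) := ⟨0, fun _ ⟨i, hi⟩ => hi ▸ h i⟩

private lemma exists_max_on_sphere (hX : 0 < Module.finrank ℝ X) (f : X → ℝ)
    (hf : Continuous f) :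
    ∃ x₀ : X, ‖x₀‖ = 1 ∧ ∀ x : X, ‖x‖ = 1 → f x ≤ f x₀ := by
  have : Nontrivial X := Module.nontrivial_of_finrank_pos hX
  have hS : IsCompact (Metric.sphere (0:X) 1) := isCompact_sphere 0 1
  have hne : (Metric.sphere (0:X) 1).Nonempty :=
    NormedSpace.sphere_nonempty.mpr zero_le_one
  obtain ⟨x₀, hx₀, hmax⟩ := hS.exists_isMaxOn hne hf.continuousOn
  exact ⟨x₀, by simpa using hx₀, fun x hx => hmax (by simpa using hx)⟩

/-- The minimal singular value inequality: `σmin (A†) ≤ σmin A` when `dim X = dim Y`. -/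
private lemma sigmaMin_adjoint_le (A : X →L[ℝ] Y)
    (hdim : Module.finrank ℝ X = Module.finrank ℝ Y) (hX : 0 < Module.finrank ℝ X) :
    (⨅ y : {y : Y // ‖y‖ = 1}, ‖(ContinuousLinearMap.adjoint A) y‖) ≤
      ⨅ x : {x : X // ‖x‖ = 1}, ‖A x‖ := by
  have hY : 0 < Module.finrank ℝ Y := hdim ▸ hX
  have hneX : Nonempty {x : X // ‖x‖ = 1} := sphere_nonempty_subtype hX
  have hneY : Nonempty {y : Y // ‖y‖ = 1} := sphere_nonempty_subtype hY
  have hbddY : BddBelow (Set.range fun y : {y : Y // ‖y‖ = 1} =>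
      ‖(ContinuousLinearMap.adjoint A) y‖) := bddBelow_norm_range _ fun _ => norm_nonneg _
  have hbddX : BddBelow (Set.range fun x : {x : X // ‖x‖ = 1} => ‖A x‖) :=
    bddBelow_norm_range _ fun _ => norm_nonneg _
  by_cases hinj : Function.Injective A
  · -- A bijective
    have hsurj : Function.Surjective A :=
      (LinearMap.injective_iff_surjective_of_finrank_eq_finrank hdim).mp
        (by exact hinj : Function.Injective (A : X →ₗ[ℝ] Y))
    set e := LinearEquiv.ofBijective (A : X →ₗ[ℝ] Y) ⟨hinj, hsurj⟩ with he
    set B : Y →L[ℝ] X := LinearMap.toContinuousLinearMap e.symm.toLinearMap with hB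
    have hBA : ∀ x : X, B (A x) = x := by
      intro x
      have h1 : B (A x) = e.symm (A x) := rfl
      have h2 : A x = e x := rfl
      rw [h1, h2, e.symm_apply_apply]
    have hAB : ∀ y : Y, A (B y) = y := by
      intro y
      have h1 : B y = (e.symm y : X) := rfl
      have h2 : A (e.symm y) = e (e.symm y) := rfl
      rw [h1, h2, e.apply_symm_apply]
    have hBAc : B.comp A = ContinuousLinearMap.id ℝ X := by ext x; simp [hBA]
    set A' := ContinuousLinearMap.adjoint A with hA'
    set B' := ContinuousLinearMap.adjoint B with hB'
    have hA'B' : A'.comp B' = ContinuousLinearMap.id ℝ X := by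
      rw [hA', hB', ← ContinuousLinearMap.adjoint_comp, hBAc, ContinuousLinearMap.adjoint_id]
    have hB'norm : ‖B'‖ = ‖B‖ := LinearIsometryEquiv.norm_map ContinuousLinearMap.adjoint B
    have hBpos : 0 < ‖B‖ := by
      obtain ⟨x₁⟩ := hneX
      have hx₁ : (x₁ : X) ≠ 0 := by
        intro h
        have h2 := x₁.2
        rw [h, norm_zero] at h2
        exact one_ne_zero h2.symm
      rw [norm_pos_iff]
      intro hB0
      have := hBA x₁
      rw [hB0] at this
      simp at this
      exact hx₁ this.symm
    -- lower bound for σmin A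
    have hlow : ‖B‖⁻¹ ≤ ⨅ x : {x : X // ‖x‖ = 1}, ‖A x‖ := by
      refine le_ciInf fun x => ?_
      have h1 : (1:ℝ) ≤ ‖B‖ * ‖A x‖ := by
        have := B.le_opNorm (A x)
        rw [hBA, x.2] at this
        linarith
      rw [inv_le_iff_one_le_mul₀ hBpos]
      linarith [mul_comm ‖B‖ ‖A (x:X)‖]
    -- maximizer of ‖B' ·‖ on the sphere of X
    obtain ⟨x₀, hx₀n, hmax⟩ := exists_max_on_sphere hX (fun x => ‖B' x‖)
      (by fun_prop)
    have hople : ‖B'‖ ≤ ‖B' x₀‖ := by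
      refine B'.opNorm_le_bound (norm_nonneg _) fun z => ?_
      rcases eq_or_ne z 0 with rfl | hz
      · simp
      · have hu : ‖(‖z‖⁻¹ • z)‖ = 1 := by
          rw [norm_smul, norm_inv, norm_norm, inv_mul_cancel₀ (norm_ne_zero_iff.mpr hz)]
        have := hmax _ hu
        rw [map_smul, norm_smul, norm_inv, norm_norm] at this
        have hzpos : 0 < ‖z‖ := norm_pos_iff.mpr hz
        calc ‖B' z‖ = ‖z‖ * (‖z‖⁻¹ * ‖B' z‖) := by field_simp
        _ ≤ ‖z‖ * ‖B' x₀‖ := by nlinarith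
        _ = ‖B' x₀‖ * ‖z‖ := mul_comm _ _
    have hB'x₀ : ‖B' x₀‖ = ‖B‖ := le_antisymm
      (by simpa [hx₀n, hB'norm] using B'.le_opNorm x₀) (hB'norm ▸ hople)
    have hB'x₀pos : 0 < ‖B' x₀‖ := hB'x₀ ▸ hBpos
    set y : Y := ‖B' x₀‖⁻¹ • (B' x₀) with hy
    have hyn : ‖y‖ = 1 := by
      rw [hy, norm_smul, norm_inv, norm_norm, inv_mul_cancel₀ hB'x₀pos.ne']
    have hA'y : ‖A' y‖ = ‖B‖⁻¹ := by
      have : A' (B' x₀) = x₀ := by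
        have := congrArg (fun T => T x₀) hA'B'
        simpa using this
      rw [hy, map_smul, this, norm_smul, norm_inv, norm_norm, hx₀n, mul_one, hB'x₀]
    calc (⨅ y : {y : Y // ‖y‖ = 1}, ‖A' y‖) ≤ ‖A' y‖ := ciInf_le hbddY ⟨y, hyn⟩
    _ = ‖B‖⁻¹ := hA'y
    _ ≤ _ := hlow
  · -- A not injective
    have hσA : (⨅ x : {x : X // ‖x‖ = 1}, ‖A x‖) = 0 := by
      have : ∃ x : X, x ≠ 0 ∧ A x = 0 := by
        simp only [Function.not_injective_iff] at hinj
        obtain ⟨a, b, hab, hne⟩ := hinj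
        exact ⟨a - b, sub_ne_zero.mpr hne, by rw [map_sub, hab, sub_self]⟩
      obtain ⟨x, hx0, hAx⟩ := this
      have hu : ‖(‖x‖⁻¹ • x)‖ = 1 := by
        rw [norm_smul, norm_inv, norm_norm, inv_mul_cancel₀ (norm_ne_zero_iff.mpr hx0)]
      refine le_antisymm ?_ (le_ciInf fun _ => norm_nonneg _)
      calc (⨅ x : {x : X // ‖x‖ = 1}, ‖A x‖) ≤ ‖A (‖x‖⁻¹ • x)‖ := ciInf_le hbddX ⟨_, hu⟩
      _ = 0 := by rw [map_smul, hAx, smul_zero, norm_zero]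
    rw [hσA]
    -- A is not surjective either, so A† has nontrivial kernel
    have hnsurj : ¬ Function.Surjective A := fun hs =>
      hinj ((LinearMap.injective_iff_surjective_of_finrank_eq_finrank hdim).mpr hs)
    have hrange : LinearMap.range (A : X →ₗ[ℝ] Y) ≠ ⊤ := fun h => hnsurj (by
      have := LinearMap.range_eq_top.mp h
      simpa using this)
    have horth : (LinearMap.range (A : X →ₗ[ℝ] Y))ᗮ ≠ ⊥ := fun h =>
      hrange (Submodule.orthogonal_eq_bot_iff.mp h)
    obtain ⟨y, hymem, hy0⟩ := Submodule.exists_mem_ne_zero_of_ne_bot horth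
    have hyu : ‖(‖y‖⁻¹ • y)‖ = 1 := by
      rw [norm_smul, norm_inv, norm_norm, inv_mul_cancel₀ (norm_ne_zero_iff.mpr hy0)]
    have hker : (ContinuousLinearMap.adjoint A) y = 0 := by
      have h0 : (inner ℝ ((ContinuousLinearMap.adjoint A) y) ((ContinuousLinearMap.adjoint A) y) : ℝ) = 0 := by
        rw [ContinuousLinearMap.adjoint_inner_left, real_inner_comm]
        exact (Submodule.mem_orthogonal _ y).mp hymem _ (LinearMap.mem_range_self _ _)
      exact inner_self_eq_zero.mp h0
    calc (⨅ y : {y : Y // ‖y‖ = 1}, ‖(ContinuousLinearMap.adjoint A) y‖)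
        ≤ ‖(ContinuousLinearMap.adjoint A) (‖y‖⁻¹ • y)‖ := ciInf_le hbddY ⟨_, hyu⟩
    _ = 0 := by rw [map_smul, hker, smul_zero, norm_zero]

private lemma sigmaMin_adjoint_eq (A : X →L[ℝ] Y)
    (hdim : Module.finrank ℝ X = Module.finrank ℝ Y) (hX : 0 < Module.finrank ℝ X) :
    (⨅ x : {x : X // ‖x‖ = 1}, ‖A x‖) =
      ⨅ y : {y : Y // ‖y‖ = 1}, ‖(ContinuousLinearMap.adjoint A) y‖ := by
  refine le_antisymm ?_ (sigmaMin_adjoint_le A hdim hX)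
  have := sigmaMin_adjoint_le (ContinuousLinearMap.adjoint A) hdim.symm (hdim ▸ hX)
  rwa [ContinuousLinearMap.adjoint_adjoint] at this

end SigmaMin

private lemma ciInf_equiv {ι κ : Sort*} (e : ι ≃ κ) (f : κ → ℝ) :
    (⨅ i, f (e i)) = ⨅ k, f k := by
  rw [iInf, iInf]
  congr 1
  exact e.surjective.range_comp f


section AngleLemmas

variable {E : Type*} [NormedAddCommGroup E] [InnerProductSpace ℝ E] [FiniteDimensional ℝ E]

private lemma exists_unit_mem (M : Submodule ℝ E) (hM : 0 < Module.finrank ℝ M) :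
    ∃ w : E, w ∈ M ∧ ‖w‖ = 1 := by
  have hbot : M ≠ ⊥ := by
    intro h
    rw [h, finrank_bot] at hM
    exact lt_irrefl 0 hM
  obtain ⟨x, hxM, hx0⟩ := Submodule.exists_mem_ne_zero_of_ne_bot hbot
  refine ⟨‖x‖⁻¹ • x, M.smul_mem _ hxM, ?_⟩
  rw [norm_smul, norm_inv, norm_norm, inv_mul_cancel₀ (norm_ne_zero_iff.mpr hx0)]

private lemma inner_eq_proj (M : Submodule ℝ E) (v w : E) (hw : w ∈ M) :
    (inner ℝ v w : ℝ) = inner ℝ ((Submodule.orthogonalProjectionOnto M v : E)) w := by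
  have h := Submodule.sub_starProjection_mem_orthogonal (K := M) v
  have h0 : (inner ℝ (v - (Submodule.orthogonalProjectionOnto M v : E)) w : ℝ) = 0 :=
    (Submodule.mem_orthogonal' _ _).mp h w hw
  rw [inner_sub_left] at h0
  linarith

private lemma exists_w0 (M : Submodule ℝ E) (hM : 0 < Module.finrank ℝ M) (v : E) :
    ∃ w₀ : E, w₀ ∈ M ∧ ‖w₀‖ = 1 ∧
      (inner ℝ v w₀ : ℝ) = ‖(Submodule.orthogonalProjectionOnto M v : E)‖ := by
  by_cases hz : (Submodule.orthogonalProjectionOnto M v : E) = 0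
  · obtain ⟨w₀, hw₀M, hw₀⟩ := exists_unit_mem M hM
    refine ⟨w₀, hw₀M, hw₀, ?_⟩
    rw [inner_eq_proj M v w₀ hw₀M, hz, norm_zero, inner_zero_left]
  · have hp : 0 < ‖(Submodule.orthogonalProjectionOnto M v : E)‖ := norm_pos_iff.mpr hz
    have hmem : ‖(Submodule.orthogonalProjectionOnto M v : E)‖⁻¹ • (Submodule.orthogonalProjectionOnto M v : E) ∈ M :=
      M.smul_mem _ (Submodule.orthogonalProjectionOnto M v).2
    refine ⟨_, hmem, ?_, ?_⟩
    · rw [norm_smul, norm_inv, norm_norm, inv_mul_cancel₀ hp.ne']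
    · rw [inner_eq_proj M v _ hmem, real_inner_smul_right, real_inner_self_eq_norm_sq,
        pow_two]
      field_simp

private lemma inner_le_proj (M : Submodule ℝ E) (v w : E) (hw : w ∈ M) (hw1 : ‖w‖ = 1) :
    (inner ℝ v w : ℝ) ≤ ‖(Submodule.orthogonalProjectionOnto M v : E)‖ := by
  rw [inner_eq_proj M v w hw]
  calc (inner ℝ ((Submodule.orthogonalProjectionOnto M v : E)) w : ℝ)
      ≤ ‖(Submodule.orthogonalProjectionOnto M v : E)‖ * ‖w‖ := real_inner_le_norm _ _
  _ = ‖(Submodule.orthogonalProjectionOnto M v : E)‖ := by rw [hw1, mul_one]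

private lemma angle_eq_arccos_inner (v w : E) (hv : ‖v‖ = 1) (hw : ‖w‖ = 1) :
    angle v w = Real.arccos (inner ℝ v w : ℝ) := by
  unfold InnerProductGeometry.angle
  rw [hv, hw]
  norm_num

private lemma iInf_angle_eq (M : Submodule ℝ E) (hM : 0 < Module.finrank ℝ M)
    (v : E) (hv : ‖v‖ = 1) :
    (⨅ w : {w : E // w ∈ M ∧ ‖w‖ = 1}, angle v w.1) =
      Real.arccos ‖(Submodule.orthogonalProjectionOnto M v : E)‖ := by
  obtain ⟨w₀, hw₀M, hw₀1, hw₀⟩ := exists_w0 M hM v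
  have hne : Nonempty {w : E // w ∈ M ∧ ‖w‖ = 1} := ⟨⟨w₀, hw₀M, hw₀1⟩⟩
  refine le_antisymm ?_ ?_
  · have hbdd : BddBelow (Set.range fun w : {w : E // w ∈ M ∧ ‖w‖ = 1} => angle v w.1) :=
      bddBelow_norm_range (fun w : {w : E // w ∈ M ∧ ‖w‖ = 1} => angle v w.1)
        (fun w => angle_nonneg _ _)
    calc (⨅ w : {w : E // w ∈ M ∧ ‖w‖ = 1}, angle v w.1)
        ≤ angle v w₀ := ciInf_le hbdd ⟨w₀, hw₀M, hw₀1⟩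
    _ = Real.arccos ‖(Submodule.orthogonalProjectionOnto M v : E)‖ := by
        rw [angle_eq_arccos_inner v w₀ hv hw₀1, hw₀]
  · refine le_ciInf fun w => ?_
    rw [angle_eq_arccos_inner v w.1 hv w.2.2]
    exact arccos_antitone (inner_le_proj M v w.1 w.2.1 w.2.2)

private lemma iSup_arccos_eq (L M : Submodule ℝ E) (hL : 0 < Module.finrank ℝ L)
    (hM : 0 < Module.finrank ℝ M) :
    (⨆ v : {v : E // v ∈ L ∧ ‖v‖ = 1}, Real.arccos ‖(Submodule.orthogonalProjectionOnto M v.1 : E)‖) =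
      Real.arccos (⨅ v : {v : E // v ∈ L ∧ ‖v‖ = 1}, ‖(Submodule.orthogonalProjectionOnto M v.1 : E)‖) := by
  obtain ⟨u, huL, hu1⟩ := exists_unit_mem L hL
  have hne : Nonempty {v : E // v ∈ L ∧ ‖v‖ = 1} := ⟨⟨u, huL, hu1⟩⟩
  have hSc : IsCompact {v : E | v ∈ L ∧ ‖v‖ = 1} := by
    have hset : {v : E | v ∈ L ∧ ‖v‖ = 1} = (L : Set E) ∩ Metric.sphere 0 1 := by
      ext v
      simp [Set.mem_inter_iff, mem_sphere_zero_iff_norm]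
    rw [hset]
    exact (isCompact_sphere (0:E) 1).inter_left L.closed_of_finiteDimensional
  have hg : Continuous fun v : E => ‖(Submodule.orthogonalProjectionOnto M v : E)‖ :=
    (continuous_subtype_val.comp (Submodule.orthogonalProjectionOnto M).continuous).norm
  obtain ⟨v₀, hv₀, hmin⟩ := hSc.exists_isMinOn ⟨u, huL, hu1⟩ hg.continuousOn
  have hbdd : BddBelow (Set.range fun v : {v : E // v ∈ L ∧ ‖v‖ = 1} =>
      ‖(Submodule.orthogonalProjectionOnto M v.1 : E)‖) := bddBelow_norm_range _ fun _ => norm_nonneg _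
  have hinf : (⨅ v : {v : E // v ∈ L ∧ ‖v‖ = 1}, ‖(Submodule.orthogonalProjectionOnto M v.1 : E)‖) =
      ‖(Submodule.orthogonalProjectionOnto M v₀ : E)‖ :=
    le_antisymm (ciInf_le hbdd ⟨v₀, hv₀⟩) (le_ciInf fun v => hmin v.2)
  refine le_antisymm (ciSup_le fun v => arccos_antitone (ciInf_le hbdd v)) ?_
  rw [hinf]
  exact le_ciSup (f := fun v : {v : E // v ∈ L ∧ ‖v‖ = 1} =>
      Real.arccos ‖(Submodule.orthogonalProjectionOnto M v.1 : E)‖)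
    ⟨Real.pi, fun _ ⟨v, hv⟩ => hv ▸ Real.arccos_le_pi _⟩ ⟨v₀, hv₀⟩

private lemma iInf_proj_symm (L L' : Submodule ℝ E) {d : ℕ} (hd : 0 < d)
    (hL : Module.finrank ℝ L = d) (hL' : Module.finrank ℝ L' = d) :
    (⨅ v : {v : E // v ∈ L ∧ ‖v‖ = 1}, ‖(Submodule.orthogonalProjectionOnto L' v.1 : E)‖) =
      ⨅ w : {w : E // w ∈ L' ∧ ‖w‖ = 1}, ‖(Submodule.orthogonalProjectionOnto L w.1 : E)‖ := by
  set A : L →L[ℝ] L' := (Submodule.orthogonalProjectionOnto L').comp L.subtypeL with hA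
  have hadj : ContinuousLinearMap.adjoint A = (Submodule.orthogonalProjectionOnto L).comp L'.subtypeL := by
    rw [hA, ContinuousLinearMap.adjoint_comp, Submodule.adjoint_subtypeL,
      Submodule.adjoint_orthogonalProjection]
  have h := sigmaMin_adjoint_eq A (by rw [hL, hL']) (by rw [hL]; exact hd)
  rw [hadj] at h
  calc (⨅ v : {v : E // v ∈ L ∧ ‖v‖ = 1}, ‖(Submodule.orthogonalProjectionOnto L' v.1 : E)‖)
      = ⨅ x : {x : L // ‖x‖ = 1}, ‖A x‖ := by
        rw [hA]
        exact ((ciInf_equiv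
          (⟨fun x => ⟨x.1.1, x.1.2, x.2⟩, fun v => ⟨⟨v.1, v.2.1⟩, v.2.2⟩,
            fun _ => rfl, fun _ => rfl⟩ :
              {x : L // ‖x‖ = 1} ≃ {v : E // v ∈ L ∧ ‖v‖ = 1})
          (fun v : {v : E // v ∈ L ∧ ‖v‖ = 1} =>
            ‖(Submodule.orthogonalProjectionOnto L' v.1 : E)‖)).symm).trans
          (iInf_congr fun x => rfl)
  _ = ⨅ y : {y : L' // ‖y‖ = 1}, ‖((Submodule.orthogonalProjectionOnto L).comp L'.subtypeL) y‖ := h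
  _ = ⨅ w : {w : E // w ∈ L' ∧ ‖w‖ = 1}, ‖(Submodule.orthogonalProjectionOnto L w.1 : E)‖ :=
        (iInf_congr fun y => rfl).trans (ciInf_equiv
          (⟨fun y => ⟨y.1.1, y.1.2, y.2⟩, fun w => ⟨⟨w.1, w.2.1⟩, w.2.2⟩,
            fun _ => rfl, fun _ => rfl⟩ :
              {y : L' // ‖y‖ = 1} ≃ {w : E // w ∈ L' ∧ ‖w‖ = 1})
          (fun w : {w : E // w ∈ L' ∧ ‖w‖ = 1} =>
            ‖(Submodule.orthogonalProjectionOnto L w.1 : E)‖))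

end AngleLemmas

end SubspaceAngleAux

/-- For `d`-dimensional subspaces `L, L'` of `ℝⁿ` (`0 < d`), the quantity
`max_{v ∈ S(L)} min_{w ∈ S(L')} angle(v,w)` is symmetric in `L` and `L'`. -/
theorem subspace_angle_dist_symm {n d : ℕ} (hd : 0 < d)
    (L L' : Submodule ℝ (EuclideanSpace ℝ (Fin n)))
    (hL : Module.finrank ℝ L = d) (hL' : Module.finrank ℝ L' = d) :
    (⨆ v : {v : EuclideanSpace ℝ (Fin n) // v ∈ L ∧ ‖v‖ = 1},
      ⨅ w : {w : EuclideanSpace ℝ (Fin n) // w ∈ L' ∧ ‖w‖ = 1}, angle (v.1 : EuclideanSpace ℝ (Fin n)) w.1) =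
    (⨆ w : {w : EuclideanSpace ℝ (Fin n) // w ∈ L' ∧ ‖w‖ = 1},
      ⨅ v : {v : EuclideanSpace ℝ (Fin n) // v ∈ L ∧ ‖v‖ = 1}, angle (v.1 : EuclideanSpace ℝ (Fin n)) w.1) := by
  have hLpos : 0 < Module.finrank ℝ L := by rw [hL]; exact hd
  have hL'pos : 0 < Module.finrank ℝ L' := by rw [hL']; exact hd
  calc (⨆ v : {v : EuclideanSpace ℝ (Fin n) // v ∈ L ∧ ‖v‖ = 1},
      ⨅ w : {w : EuclideanSpace ℝ (Fin n) // w ∈ L' ∧ ‖w‖ = 1},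
        angle (v.1 : EuclideanSpace ℝ (Fin n)) w.1)
      = ⨆ v : {v : EuclideanSpace ℝ (Fin n) // v ∈ L ∧ ‖v‖ = 1},
          Real.arccos ‖(Submodule.orthogonalProjectionOnto L' v.1 : EuclideanSpace ℝ (Fin n))‖ :=
        iSup_congr fun v => iInf_angle_eq L' hL'pos v.1 v.2.2
  _ = Real.arccos (⨅ v : {v : EuclideanSpace ℝ (Fin n) // v ∈ L ∧ ‖v‖ = 1},
        ‖(Submodule.orthogonalProjectionOnto L' v.1 : EuclideanSpace ℝ (Fin n))‖) :=
        iSup_arccos_eq L L' hLpos hL'pos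
  _ = Real.arccos (⨅ w : {w : EuclideanSpace ℝ (Fin n) // w ∈ L' ∧ ‖w‖ = 1},
        ‖(Submodule.orthogonalProjectionOnto L w.1 : EuclideanSpace ℝ (Fin n))‖) := by
        rw [iInf_proj_symm L L' hd hL hL']
  _ = ⨆ w : {w : EuclideanSpace ℝ (Fin n) // w ∈ L' ∧ ‖w‖ = 1},
        Real.arccos ‖(Submodule.orthogonalProjectionOnto L w.1 : EuclideanSpace ℝ (Fin n))‖ :=
        (iSup_arccos_eq L' L hL'pos hLpos).symm
  _ = ⨆ w : {w : EuclideanSpace ℝ (Fin n) // w ∈ L' ∧ ‖w‖ = 1},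
      ⨅ v : {v : EuclideanSpace ℝ (Fin n) // v ∈ L ∧ ‖v‖ = 1},
        angle (v.1 : EuclideanSpace ℝ (Fin n)) w.1 := by
      refine iSup_congr fun w => ?_
      rw [← iInf_angle_eq L hLpos w.1 w.2.2]
      exact iInf_congr fun v => angle_comm _ _
end
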